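/- Let f : ℝ → ℝ be convex with f(1) = 0, let V be a finite type, let q be a probability distribution on V with q(i) > 0 for all i, fix n ∈ V with q(n) < 1, and let γ ∈ [0,1]. Define h by h(n) = γ and h(i) = ((1 − γ)/(1 − q(n)))·q(i) for i ≠ n. Then h is a probability distribution on V, and D_f(h‖q) = q(n)·f(γ/q(n)) + (1 − q(n))·f((1 − γ)/(1 − q(n))). -/

import Mathlib

/-- The scaled distribution `h` (mass `γ` at `n`, rest proportional to `q`) is a
probability distribution and its `f`-divergence from `q` equals the binary
`f`-divergence. -/
theorem stmt_4 {V : Type*} [Fintype V] [Nonempty V]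
    (f : ℝ → ℝ) (hf : ConvexOn ℝ Set.univ f) (hf1 : f 1 = 0)
    (q : V → ℝ) (hq_pos : ∀ i, 0 < q i) (hq_sum : ∑ i, q i = 1)
    (n : V) (hqn : q n < 1)
    (γ : ℝ) (hγ : γ ∈ Set.Icc (0 : ℝ) 1)
    (h : V → ℝ) (hhn : h n = γ)
    (hhi : ∀ i, i ≠ n → h i = (1 - γ) / (1 - q n) * q i) :
    (∀ i, 0 ≤ h i) ∧ (∑ i, h i = 1) ∧
      ∑ i, q i * f (h i / q i) =
        q n * f (γ / q n) + (1 - q n) * f ((1 - γ) / (1 - q n)) := by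
  classical
  obtain ⟨hγ0, hγ1⟩ := hγ
  have hqn' : (0:ℝ) < 1 - q n := by linarith
  have hrest : ∑ i ∈ Finset.univ.erase n, q i = 1 - q n := by
    have := Finset.add_sum_erase Finset.univ q (Finset.mem_univ n)
    rw [hq_sum] at this
    linarith
  refine ⟨?_, ?_, ?_⟩
  · intro i
    by_cases hi : i = n
    · rw [hi, hhn]; exact hγ0
    · rw [hhi i hi]
      exact mul_nonneg (div_nonneg (by linarith) hqn'.le) (hq_pos i).le
  · rw [← Finset.add_sum_erase Finset.univ h (Finset.mem_univ n), hhn]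
    rw [Finset.sum_congr rfl (fun i hi => hhi i (Finset.ne_of_mem_erase hi)),
      ← Finset.mul_sum, hrest]
    field_simp
    ring
  · rw [← Finset.add_sum_erase Finset.univ (fun i => q i * f (h i / q i))
      (Finset.mem_univ n)]
    simp only [hhn]
    congr 1
    have : ∀ i ∈ Finset.univ.erase n,
        q i * f (h i / q i) = q i * f ((1 - γ) / (1 - q n)) := by
      intro i hi
      rw [hhi i (Finset.ne_of_mem_erase hi),
        mul_div_assoc, div_self (hq_pos i).ne', mul_one]
    rw [Finset.sum_congr rfl this, ← Finset.sum_mul, hrest]
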